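/- Invariance for the order-2 boundary Hamiltonian: define on ℝ³×ℝ³ the true Hamiltonian H_{c₃}(x,p) = H₀(x,p) + u_{c₃}H₁(x,p) + η_{c₃}(x,p)g₃(x), where g₃(x) = x₃ − 1, u_{c₃} = −(−c₁(c₄+c₆)/c₅ + c₂)/c₇ is a constant, and η_{c₃}(x,p) = −c₃p₂ (c₃ denoting the constant). Let z(·) = (x(·),p(·)) solve ż = X_{H_{c₃}}(z) on an interval J containing 0. (i) If g₃(x(0)) = 0 and (F₀·g₃)(x(0)) = c₄ + c₅x₁(0) + c₆x₃(0)² = 0, then g₃(x(t)) = 0 and (F₀·g₃)(x(t)) = 0 for all t ∈ J, and z(·) with control u_{c₃} and multiplier η_{c₃}∘z is an extremal of the state-constrained problem. (ii) If in addition H₁(z(0)) = 0 and H₀₁(z(0)) = 0, then H₁(z(t)) = 0 and H₀₁(z(t)) = 0 for all t ∈ J. -/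

import Mathlib

noncomputable section

/-- Drift vector field of the electric vehicle. -/
def F0 (c1 c2 c3 c4 c5 c6 : ℝ) (x : Fin 3 → ℝ) : Fin 3 → ℝ :=
  ![c1 * x 0 + c2 * x 2, c3 * x 2, c4 + c5 * x 0 + c6 * (x 2) ^ 2]

/-- Control vector field of the electric vehicle. -/
def F1 (c7 : ℝ) (_x : Fin 3 → ℝ) : Fin 3 → ℝ := ![c7, 0, 0]

/-- The Hamiltonian vector field `X_h = (∂h/∂p, −∂h/∂x)` of a function `h`
on `ℝ³ × ℝ³` (coordinates `(x, p)`). -/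
def Xham (h : (Fin 3 → ℝ) × (Fin 3 → ℝ) → ℝ) (z : (Fin 3 → ℝ) × (Fin 3 → ℝ)) :
    (Fin 3 → ℝ) × (Fin 3 → ℝ) :=
  (fun i => fderiv ℝ h z ((0 : Fin 3 → ℝ), Pi.single i (1:ℝ)),
   fun i => -fderiv ℝ h z (Pi.single i (1:ℝ), (0 : Fin 3 → ℝ)))

/-- Hamiltonian lift `H₀(x,p) = ⟨p, F₀(x)⟩`. -/
def H0 (c1 c2 c3 c4 c5 c6 : ℝ) (z : (Fin 3 → ℝ) × (Fin 3 → ℝ)) : ℝ :=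
  ∑ i, z.2 i * F0 c1 c2 c3 c4 c5 c6 z.1 i

/-- Hamiltonian lift `H₁(x,p) = ⟨p, F₁(x)⟩ = c₇ p₁`. -/
def H1 (c7 : ℝ) (z : (Fin 3 → ℝ) × (Fin 3 → ℝ)) : ℝ := c7 * z.2 0

/-- `H₀₁(x,p) = ⟨p, [F₀,F₁](x)⟩ = −c₇(c₁p₁ + c₅p₃)`. -/
def H01 (c1 c5 c7 : ℝ) (z : (Fin 3 → ℝ) × (Fin 3 → ℝ)) : ℝ :=
  -(c7 * (c1 * z.2 0 + c5 * z.2 2))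

/-- Constant feedback boundary control of the order-2 constraint
`g₃(x) = x₃ − 1`. -/
def uc3 (c1 c2 c4 c5 c6 c7 : ℝ) : ℝ := -(-(c1 * (c4 + c6)) / c5 + c2) / c7

/-- Multiplier of the order-2 constraint. -/
def etac3 (c3 : ℝ) (z : (Fin 3 → ℝ) × (Fin 3 → ℝ)) : ℝ := -(c3 * z.2 1)

/-- True Hamiltonian of the order-2 boundary arc:
`H_{c₃} = H₀ + u_{c₃}H₁ + η_{c₃} g₃`. -/
def Hc3 (c1 c2 c3 c4 c5 c6 c7 : ℝ) (z : (Fin 3 → ℝ) × (Fin 3 → ℝ)) : ℝ :=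
  H0 c1 c2 c3 c4 c5 c6 z + uc3 c1 c2 c4 c5 c6 c7 * H1 c7 z + etac3 c3 z * (z.1 2 - 1)

open Set Filter Topology

section GronwallHelpers
variable {E : Type*} [NormedAddCommGroup E] [NormedSpace ℝ E]

lemma stmt18_aux_right {f f' : ℝ → E} {K a b : ℝ}
    (hd : ∀ t ∈ Icc a b, HasDerivWithinAt f (f' t) (Icc a b) t)
    (hb : ∀ t ∈ Icc a b, ‖f' t‖ ≤ K * ‖f t‖)
    (h0 : f a = 0) : ∀ t ∈ Icc a b, f t = 0 := by
  intro t ht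
  have hc : ContinuousOn f (Icc a b) := fun s hs => (hd s hs).continuousWithinAt
  have hd' : ∀ s ∈ Ico a b, HasDerivWithinAt f (f' s) (Ici s) s := by
    intro s hs
    refine (hd s (Ico_subset_Icc_self hs)).mono_of_mem_nhdsWithin ?_
    have h1 : Ici s ∩ Iio b ∈ 𝓝[Ici s] s := inter_mem_nhdsWithin _ (Iio_mem_nhds hs.2)
    refine mem_of_superset h1 ?_
    rintro u ⟨hu1, hu2⟩
    exact ⟨le_trans hs.1 hu1, le_of_lt hu2⟩
  have key := norm_le_gronwallBound_of_norm_deriv_right_le (δ := 0) (ε := 0) hc hd'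
    (by simp [h0]) (fun s hs => by simpa using hb s (Ico_subset_Icc_self hs)) t ht
  rw [gronwallBound_ε0_δ0] at key
  simpa using le_antisymm key (norm_nonneg _)

lemma stmt18_aux_two {f f' : ℝ → E} {K a b c : ℝ} (hc : c ∈ Icc a b)
    (hd : ∀ t ∈ Icc a b, HasDerivWithinAt f (f' t) (Icc a b) t)
    (hb : ∀ t ∈ Icc a b, ‖f' t‖ ≤ K * ‖f t‖)
    (h0 : f c = 0) : ∀ t ∈ Icc a b, f t = 0 := by
  intro t ht
  rcases le_total c t with h | h
  · have sub : Icc c b ⊆ Icc a b := Icc_subset_Icc hc.1 le_rfl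
    refine stmt18_aux_right (f' := f') (K := K) (a := c) (b := b)
      (fun s hs => (hd s (sub hs)).mono sub) (fun s hs => hb s (sub hs)) h0 t ⟨h, ht.2⟩
  · have sub : Icc a c ⊆ Icc a b := Icc_subset_Icc le_rfl hc.2
    set σ : ℝ → ℝ := fun s => a + c - s with hσ
    have hσmap : MapsTo σ (Icc a c) (Icc a c) := by
      intro s hs
      constructor <;> simp [hσ] <;> linarith [hs.1, hs.2]
    have hgd : ∀ s ∈ Icc a c, HasDerivWithinAt (f ∘ σ) ((-1 : ℝ) • f' (σ s)) (Icc a c) s := by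
      intro s hs
      have hσd : HasDerivWithinAt σ (-1) (Icc a c) s := by
        have h := ((hasDerivWithinAt_const s (Icc a c) (a + c)).sub (hasDerivWithinAt_id s _))
        rw [zero_sub] at h
        exact h
      exact HasDerivWithinAt.scomp s ((hd (σ s) (sub (hσmap hs))).mono sub) hσd hσmap
    have hz : ∀ s ∈ Icc a c, (f ∘ σ) s = 0 := by
      refine stmt18_aux_right (f' := fun s => (-1 : ℝ) • f' (σ s)) (K := K) hgd ?_ ?_
      · intro s hs
        simpa using hb (σ s) (sub (hσmap hs))
      · show f (a + c - a) = 0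
        rw [show a + c - a = c by ring, h0]
    have hσt : σ (a + c - t) = t := by simp [hσ]
    have ht' : a + c - t ∈ Icc a c := by constructor <;> linarith [ht.1, h]
    simpa [hσt] using hz (a + c - t) ht'

lemma stmt18_key_zero {f f' : ℝ → E} {J : Set ℝ} (hJ : J.OrdConnected) (h0J : (0:ℝ) ∈ J)
    (hd : ∀ t ∈ J, HasDerivWithinAt f (f' t) J t)
    {g : ℝ → ℝ} (hg : ContinuousOn g J)
    (hb : ∀ t ∈ J, ‖f' t‖ ≤ g t * ‖f t‖)
    (h0 : f 0 = 0) : ∀ t ∈ J, f t = 0 := by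
  intro t ht
  obtain ⟨a, haJ, ha1, ha2⟩ : ∃ a, a ∈ J ∧ a ≤ t ∧ a ≤ 0 := by
    rcases le_total t 0 with h | h
    · exact ⟨t, ht, le_rfl, h⟩
    · exact ⟨0, h0J, h, le_rfl⟩
  obtain ⟨b, hbJ, hb1, hb2⟩ : ∃ b, b ∈ J ∧ t ≤ b ∧ 0 ≤ b := by
    rcases le_total t 0 with h | h
    · exact ⟨0, h0J, h, le_rfl⟩
    · exact ⟨t, ht, le_rfl, h⟩
  have hsub : Icc a b ⊆ J := hJ.out haJ hbJ
  obtain ⟨C, hC⟩ := isCompact_Icc.exists_bound_of_continuousOn (hg.mono hsub)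
  have h0m : (0:ℝ) ∈ Icc a b := ⟨ha2, hb2⟩
  have htm : t ∈ Icc a b := ⟨ha1, hb1⟩
  refine stmt18_aux_two (K := C) h0m (fun s hs => (hd s (hsub hs)).mono hsub) ?_ h0 t htm
  intro s hs
  calc ‖f' s‖ ≤ g s * ‖f s‖ := hb s (hsub hs)
    _ ≤ C * ‖f s‖ := by
        refine mul_le_mul_of_nonneg_right ?_ (norm_nonneg _)
        exact le_trans (le_abs_self _) (hC s hs)

end GronwallHelpers

local notation "Zsp" => (Fin 3 → ℝ) × (Fin 3 → ℝ)

lemma stmt18_fderiv_Hc3_apply (c1 c2 c3 c4 c5 c6 c7 : ℝ) (z v : Zsp) :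
    fderiv ℝ (Hc3 c1 c2 c3 c4 c5 c6 c7) z v =
      v.1 0 * (c1 * z.2 0 + c5 * z.2 2) + v.1 2 * (c2 * z.2 0 + 2 * c6 * z.1 2 * z.2 2)
      + v.2 0 * (c1 * z.1 0 + c2 * z.1 2 + uc3 c1 c2 c4 c5 c6 c7 * c7)
      + v.2 1 * c3 + v.2 2 * (c4 + c5 * z.1 0 + c6 * z.1 2 ^ 2) := by
  set u := uc3 c1 c2 c4 c5 c6 c7 with hu
  have e : Hc3 c1 c2 c3 c4 c5 c6 c7 = fun w : Zsp =>
      (w.2 0 * (c1 * w.1 0 + c2 * w.1 2) + w.2 1 * (c3 * w.1 2)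
        + w.2 2 * (c4 + (c5 * w.1 0 + c6 * (w.1 2 * w.1 2)))
        + (u * c7) * w.2 0 + (-(c3 * w.2 1)) * (w.1 2 - 1)) := by
    funext w
    simp [Hc3, H0, F0, H1, etac3, Fin.sum_univ_three]
    ring
  rw [e]
  have hx0 : HasFDerivAt (fun w : Zsp => w.1 0)
      ((ContinuousLinearMap.proj 0 : (Fin 3 → ℝ) →L[ℝ] ℝ).comp (ContinuousLinearMap.fst ℝ (Fin 3 → ℝ) (Fin 3 → ℝ))) z :=
    ((ContinuousLinearMap.proj 0 : (Fin 3 → ℝ) →L[ℝ] ℝ).comp (ContinuousLinearMap.fst ℝ (Fin 3 → ℝ) (Fin 3 → ℝ))).hasFDerivAt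
  have hx2 : HasFDerivAt (fun w : Zsp => w.1 2)
      ((ContinuousLinearMap.proj 2 : (Fin 3 → ℝ) →L[ℝ] ℝ).comp (ContinuousLinearMap.fst ℝ (Fin 3 → ℝ) (Fin 3 → ℝ))) z :=
    ((ContinuousLinearMap.proj 2 : (Fin 3 → ℝ) →L[ℝ] ℝ).comp (ContinuousLinearMap.fst ℝ (Fin 3 → ℝ) (Fin 3 → ℝ))).hasFDerivAt
  have hp0 : HasFDerivAt (fun w : Zsp => w.2 0)
      ((ContinuousLinearMap.proj 0 : (Fin 3 → ℝ) →L[ℝ] ℝ).comp (ContinuousLinearMap.snd ℝ (Fin 3 → ℝ) (Fin 3 → ℝ))) z :=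
    ((ContinuousLinearMap.proj 0 : (Fin 3 → ℝ) →L[ℝ] ℝ).comp (ContinuousLinearMap.snd ℝ (Fin 3 → ℝ) (Fin 3 → ℝ))).hasFDerivAt
  have hp1 : HasFDerivAt (fun w : Zsp => w.2 1)
      ((ContinuousLinearMap.proj 1 : (Fin 3 → ℝ) →L[ℝ] ℝ).comp (ContinuousLinearMap.snd ℝ (Fin 3 → ℝ) (Fin 3 → ℝ))) z :=
    ((ContinuousLinearMap.proj 1 : (Fin 3 → ℝ) →L[ℝ] ℝ).comp (ContinuousLinearMap.snd ℝ (Fin 3 → ℝ) (Fin 3 → ℝ))).hasFDerivAt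
  have hp2 : HasFDerivAt (fun w : Zsp => w.2 2)
      ((ContinuousLinearMap.proj 2 : (Fin 3 → ℝ) →L[ℝ] ℝ).comp (ContinuousLinearMap.snd ℝ (Fin 3 → ℝ) (Fin 3 → ℝ))) z :=
    ((ContinuousLinearMap.proj 2 : (Fin 3 → ℝ) →L[ℝ] ℝ).comp (ContinuousLinearMap.snd ℝ (Fin 3 → ℝ) (Fin 3 → ℝ))).hasFDerivAt
  have T1 := hp0.mul ((hx0.const_mul c1).add (hx2.const_mul c2))
  have T2 := hp1.mul (hx2.const_mul c3)
  have T3 := hp2.mul ((hasFDerivAt_const c4 z).add ((hx0.const_mul c5).add ((hx2.mul hx2).const_mul c6)))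
  have T4 := hp0.const_mul (u * c7)
  have T5 := (hp1.const_mul c3).neg.mul (hx2.sub_const 1)
  have H := (((T1.add T2).add T3).add T4).add T5
  erw [H.fderiv]
  simp [ContinuousLinearMap.add_apply, ContinuousLinearMap.smul_apply,
    ContinuousLinearMap.coe_comp', ContinuousLinearMap.coe_fst', ContinuousLinearMap.coe_snd',
    ContinuousLinearMap.proj_apply, ContinuousLinearMap.neg_apply, smul_eq_mul]
  ring

lemma stmt18_Xham_eval (c1 c2 c3 c4 c5 c6 c7 : ℝ) (z : Zsp) :
    (Xham (Hc3 c1 c2 c3 c4 c5 c6 c7) z).1 0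
        = c1 * z.1 0 + c2 * z.1 2 + uc3 c1 c2 c4 c5 c6 c7 * c7
      ∧ (Xham (Hc3 c1 c2 c3 c4 c5 c6 c7) z).1 1 = c3
      ∧ (Xham (Hc3 c1 c2 c3 c4 c5 c6 c7) z).1 2 = c4 + c5 * z.1 0 + c6 * z.1 2 ^ 2
      ∧ (Xham (Hc3 c1 c2 c3 c4 c5 c6 c7) z).2 0 = -(c1 * z.2 0 + c5 * z.2 2)
      ∧ (Xham (Hc3 c1 c2 c3 c4 c5 c6 c7) z).2 1 = 0
      ∧ (Xham (Hc3 c1 c2 c3 c4 c5 c6 c7) z).2 2 = -(c2 * z.2 0 + 2 * c6 * z.1 2 * z.2 2) := by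
  refine ⟨?_, ?_, ?_, ?_, ?_, ?_⟩ <;>
  · show _ = _
    rw [Xham]
    simp only [stmt18_fderiv_Hc3_apply, Pi.single_apply, Pi.zero_apply, Fin.ext_iff]
    norm_num

lemma stmt18_compFst (i : Fin 3) {w : ℝ → Zsp} {v : Zsp} {J : Set ℝ} {t : ℝ}
    (h : HasDerivWithinAt w v J t) :
    HasDerivWithinAt (fun s => (w s).1 i) (v.1 i) J t :=
  (((ContinuousLinearMap.proj i : (Fin 3 → ℝ) →L[ℝ] ℝ).comp
    (ContinuousLinearMap.fst ℝ (Fin 3 → ℝ) (Fin 3 → ℝ))).hasFDerivAt).comp_hasDerivWithinAt t h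

lemma stmt18_compSnd (i : Fin 3) {w : ℝ → Zsp} {v : Zsp} {J : Set ℝ} {t : ℝ}
    (h : HasDerivWithinAt w v J t) :
    HasDerivWithinAt (fun s => (w s).2 i) (v.2 i) J t :=
  (((ContinuousLinearMap.proj i : (Fin 3 → ℝ) →L[ℝ] ℝ).comp
    (ContinuousLinearMap.snd ℝ (Fin 3 → ℝ) (Fin 3 → ℝ))).hasFDerivAt).comp_hasDerivWithinAt t h

set_option maxHeartbeats 2000000 in
/-- Invariance for the order-2 boundary Hamiltonian: (i) a solution of
`ż = X_{H_{c₃}}(z)` starting on `{g₃ = 0} ∩ {F₀·g₃ = 0}` stays there and is an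
extremal of the state-constrained problem (with constant control `u_{c₃}` and
multiplier `η_{c₃}`); (ii) if moreover `H₁ = H₀₁ = 0` initially, then
`H₁ ≡ H₀₁ ≡ 0` along the solution. -/
theorem stmt18 (c1 c2 c3 c4 c5 c6 c7 : ℝ)
    (h1 : c1 < 0) (h2 : c2 < 0) (h3 : 0 < c3) (h4 : c4 < 0)
    (h5 : 0 < c5) (h6 : c6 < 0) (h7 : 0 < c7)
    (J : Set ℝ) (hJ : J.OrdConnected) (h0J : (0:ℝ) ∈ J)
    (z : ℝ → (Fin 3 → ℝ) × (Fin 3 → ℝ))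
    (hz : ∀ t ∈ J, HasDerivWithinAt z (Xham (Hc3 c1 c2 c3 c4 c5 c6 c7) (z t)) J t) :
    ((z 0).1 2 - 1 = 0 →
      c4 + c5 * (z 0).1 0 + c6 * ((z 0).1 2) ^ 2 = 0 →
      ∀ t ∈ J,
        (z t).1 2 - 1 = 0 ∧
        c4 + c5 * (z t).1 0 + c6 * ((z t).1 2) ^ 2 = 0 ∧
        HasDerivWithinAt (fun s => (z s).1 0)
          (c1 * (z t).1 0 + c2 * (z t).1 2 + uc3 c1 c2 c4 c5 c6 c7 * c7) J t ∧
        HasDerivWithinAt (fun s => (z s).1 1) (c3 * (z t).1 2) J t ∧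
        HasDerivWithinAt (fun s => (z s).1 2)
          (c4 + c5 * (z t).1 0 + c6 * ((z t).1 2) ^ 2) J t ∧
        HasDerivWithinAt (fun s => (z s).2 0)
          (-(c1 * (z t).2 0 + c5 * (z t).2 2)) J t ∧
        HasDerivWithinAt (fun s => (z s).2 1) 0 J t ∧
        HasDerivWithinAt (fun s => (z s).2 2)
          (-(c2 * (z t).2 0 + c3 * (z t).2 1 + 2 * c6 * (z t).1 2 * (z t).2 2)
            - etac3 c3 (z t) * 1) J t) ∧
    ((z 0).1 2 - 1 = 0 →
      c4 + c5 * (z 0).1 0 + c6 * ((z 0).1 2) ^ 2 = 0 →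
      H1 c7 (z 0) = 0 → H01 c1 c5 c7 (z 0) = 0 →
      ∀ t ∈ J, H1 c7 (z t) = 0 ∧ H01 c1 c5 c7 (z t) = 0) := by
  have hc5 : c5 ≠ 0 := ne_of_gt h5
  have hc7 : c7 ≠ 0 := ne_of_gt h7
  -- componentwise derivatives
  have hx0d : ∀ t ∈ J, HasDerivWithinAt (fun s => (z s).1 0)
      (c1 * (z t).1 0 + c2 * (z t).1 2 + uc3 c1 c2 c4 c5 c6 c7 * c7) J t :=
    fun t ht => (stmt18_Xham_eval c1 c2 c3 c4 c5 c6 c7 (z t)).1 ▸ stmt18_compFst 0 (hz t ht)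
  have hx1d : ∀ t ∈ J, HasDerivWithinAt (fun s => (z s).1 1) c3 J t :=
    fun t ht => (stmt18_Xham_eval c1 c2 c3 c4 c5 c6 c7 (z t)).2.1 ▸ stmt18_compFst 1 (hz t ht)
  have hx2d : ∀ t ∈ J, HasDerivWithinAt (fun s => (z s).1 2)
      (c4 + c5 * (z t).1 0 + c6 * ((z t).1 2) ^ 2) J t :=
    fun t ht => (stmt18_Xham_eval c1 c2 c3 c4 c5 c6 c7 (z t)).2.2.1 ▸ stmt18_compFst 2 (hz t ht)
  have hp0d : ∀ t ∈ J, HasDerivWithinAt (fun s => (z s).2 0)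
      (-(c1 * (z t).2 0 + c5 * (z t).2 2)) J t :=
    fun t ht => (stmt18_Xham_eval c1 c2 c3 c4 c5 c6 c7 (z t)).2.2.2.1 ▸ stmt18_compSnd 0 (hz t ht)
  have hp1d : ∀ t ∈ J, HasDerivWithinAt (fun s => (z s).2 1) 0 J t :=
    fun t ht => (stmt18_Xham_eval c1 c2 c3 c4 c5 c6 c7 (z t)).2.2.2.2.1 ▸ stmt18_compSnd 1 (hz t ht)
  have hp2d : ∀ t ∈ J, HasDerivWithinAt (fun s => (z s).2 2)
      (-(c2 * (z t).2 0 + 2 * c6 * (z t).1 2 * (z t).2 2)) J t :=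
    fun t ht => (stmt18_Xham_eval c1 c2 c3 c4 c5 c6 c7 (z t)).2.2.2.2.2 ▸ stmt18_compSnd 2 (hz t ht)
  have hx2c : ContinuousOn (fun t => (z t).1 2) J := fun t ht => (hx2d t ht).continuousWithinAt
  constructor
  · -- part (i)
    intro ha0 hb0
    -- invariance of (g₃, F₀·g₃) via Gronwall
    have hfd : ∀ t ∈ J, HasDerivWithinAt
        (fun s => (((z s).1 2 - 1, c4 + c5 * (z s).1 0 + c6 * ((z s).1 2) ^ 2) : ℝ × ℝ))
        ((c4 + c5 * (z t).1 0 + c6 * ((z t).1 2) ^ 2,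
          (c1 + 2 * c6 * (z t).1 2) * (c4 + c5 * (z t).1 0 + c6 * ((z t).1 2) ^ 2)
            + (c5 * c2 - c1 * c6 * ((z t).1 2 + 1)) * ((z t).1 2 - 1))) J t := by
      intro t ht
      refine HasDerivWithinAt.prodMk ((hx2d t ht).sub_const 1) ?_
      have h2 := (((hx0d t ht).const_mul c5).const_add c4).add
        (((hx2d t ht).pow 2).const_mul c6)
      convert h2 using 1
      · rfl
      simp only [uc3]
      field_simp
      ring
    have hfb : ∀ t ∈ J,
        ‖((c4 + c5 * (z t).1 0 + c6 * ((z t).1 2) ^ 2,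
          (c1 + 2 * c6 * (z t).1 2) * (c4 + c5 * (z t).1 0 + c6 * ((z t).1 2) ^ 2)
            + (c5 * c2 - c1 * c6 * ((z t).1 2 + 1)) * ((z t).1 2 - 1)) : ℝ × ℝ)‖
          ≤ (1 + (|c1| + 2 * |c6| * |(z t).1 2|)
              + (|c5 * c2| + |c1 * c6| * (|(z t).1 2| + 1)))
            * ‖(((z t).1 2 - 1, c4 + c5 * (z t).1 0 + c6 * ((z t).1 2) ^ 2) : ℝ × ℝ)‖ := by
      intro t ht
      set X := (z t).1 2 with hXdef
      set A := (z t).1 2 - 1 with hAdef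
      set B := c4 + c5 * (z t).1 0 + c6 * ((z t).1 2) ^ 2 with hBdef
      rw [Prod.norm_def, Prod.norm_def]
      simp only [Real.norm_eq_abs]
      set M := max |A| |B| with hMdef
      have hAM : |A| ≤ M := le_max_left _ _
      have hBM : |B| ≤ M := le_max_right _ _
      have hM0 : 0 ≤ M := le_trans (abs_nonneg _) hAM
      have k1 : |c1 + 2 * c6 * X| ≤ |c1| + 2 * |c6| * |X| := by
        calc |c1 + 2 * c6 * X| ≤ |c1| + |2 * c6 * X| := abs_add_le _ _
          _ = |c1| + 2 * |c6| * |X| := by rw [abs_mul, abs_mul]; norm_num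
      have k2 : |c5 * c2 - c1 * c6 * (X + 1)| ≤ |c5 * c2| + |c1 * c6| * (|X| + 1) := by
        calc |c5 * c2 - c1 * c6 * (X + 1)| ≤ |c5 * c2| + |c1 * c6 * (X + 1)| := abs_sub _ _
          _ = |c5 * c2| + |c1 * c6| * |X + 1| := by rw [abs_mul (c1 * c6) (X + 1)]
          _ ≤ |c5 * c2| + |c1 * c6| * (|X| + 1) := by
              gcongr
              simpa using abs_add_le X 1
      apply max_le
      · have g1 : 1 ≤ 1 + (|c1| + 2 * |c6| * |X|) + (|c5 * c2| + |c1 * c6| * (|X| + 1)) := by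
          nlinarith [abs_nonneg c1, mul_nonneg (abs_nonneg c6) (abs_nonneg X),
            abs_nonneg (c5 * c2), mul_nonneg (abs_nonneg (c1 * c6))
              (by positivity : (0:ℝ) ≤ |X| + 1)]
        nlinarith [hBM, hM0, g1]
      · have habs : |(c1 + 2 * c6 * X) * B + (c5 * c2 - c1 * c6 * (X + 1)) * A|
            ≤ (|c1| + 2 * |c6| * |X|) * M + (|c5 * c2| + |c1 * c6| * (|X| + 1)) * M := by
          calc |(c1 + 2 * c6 * X) * B + (c5 * c2 - c1 * c6 * (X + 1)) * A|
              ≤ |(c1 + 2 * c6 * X) * B| + |(c5 * c2 - c1 * c6 * (X + 1)) * A| := abs_add_le _ _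
            _ = |c1 + 2 * c6 * X| * |B| + |c5 * c2 - c1 * c6 * (X + 1)| * |A| := by
                rw [abs_mul, abs_mul]
            _ ≤ (|c1| + 2 * |c6| * |X|) * M + (|c5 * c2| + |c1 * c6| * (|X| + 1)) * M :=
                add_le_add
                  (mul_le_mul k1 hBM (abs_nonneg _) (by positivity))
                  (mul_le_mul k2 hAM (abs_nonneg _) (by positivity))
        nlinarith [habs, hM0]
    have hg : ContinuousOn (fun t => 1 + (|c1| + 2 * |c6| * |(z t).1 2|)
        + (|c5 * c2| + |c1 * c6| * (|(z t).1 2| + 1))) J := by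
      have habs : ContinuousOn (fun t => |(z t).1 2|) J := hx2c.abs
      exact (continuousOn_const.add (continuousOn_const.add
          (continuousOn_const.mul habs))).add
        (continuousOn_const.add (continuousOn_const.mul (habs.add continuousOn_const)))
    have h0 : (((z 0).1 2 - 1, c4 + c5 * (z 0).1 0 + c6 * ((z 0).1 2) ^ 2) : ℝ × ℝ) = 0 := by
      rw [Prod.ext_iff]
      exact ⟨ha0, hb0⟩
    have hzero := stmt18_key_zero hJ h0J hfd hg hfb h0
    intro t ht
    have hft := hzero t ht
    have hA : (z t).1 2 - 1 = 0 := by simpa using congrArg Prod.fst hft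
    have hB : c4 + c5 * (z t).1 0 + c6 * ((z t).1 2) ^ 2 = 0 := by
      simpa using congrArg Prod.snd hft
    have hx2v : (z t).1 2 = 1 := by linarith
    refine ⟨hA, hB, hx0d t ht, ?_, hx2d t ht, hp0d t ht, hp1d t ht, ?_⟩
    · rw [hx2v, mul_one]
      exact hx1d t ht
    · convert hp2d t ht using 1
      simp [etac3]
      ring
  · -- part (ii)
    intro _ _ hH1 hH01
    have hp00 : (z 0).2 0 = 0 := by
      have := hH1
      simp only [H1, mul_eq_zero] at this
      tauto
    have hp20 : (z 0).2 2 = 0 := by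
      have := hH01
      simp only [H01, neg_eq_zero, mul_eq_zero, hp00, mul_zero, zero_add] at this
      tauto
    have hfd : ∀ t ∈ J, HasDerivWithinAt
        (fun s => (((z s).2 0, (z s).2 2) : ℝ × ℝ))
        ((-(c1 * (z t).2 0 + c5 * (z t).2 2),
          -(c2 * (z t).2 0 + 2 * c6 * (z t).1 2 * (z t).2 2))) J t :=
      fun t ht => (hp0d t ht).prodMk (hp2d t ht)
    have hfb : ∀ t ∈ J,
        ‖((-(c1 * (z t).2 0 + c5 * (z t).2 2),
          -(c2 * (z t).2 0 + 2 * c6 * (z t).1 2 * (z t).2 2)) : ℝ × ℝ)‖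
          ≤ ((|c1| + |c5|) + (|c2| + 2 * |c6| * |(z t).1 2|))
            * ‖(((z t).2 0, (z t).2 2) : ℝ × ℝ)‖ := by
      intro t ht
      set X := (z t).1 2 with hXdef
      set A := (z t).2 0 with hAdef
      set B := (z t).2 2 with hBdef
      rw [Prod.norm_def, Prod.norm_def]
      simp only [Real.norm_eq_abs]
      set M := max |A| |B| with hMdef
      have hAM : |A| ≤ M := le_max_left _ _
      have hBM : |B| ≤ M := le_max_right _ _
      have hM0 : 0 ≤ M := le_trans (abs_nonneg _) hAM
      apply max_le
      · have : |-(c1 * A + c5 * B)| ≤ |c1| * M + |c5| * M := by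
          rw [abs_neg]
          calc |c1 * A + c5 * B| ≤ |c1 * A| + |c5 * B| := abs_add_le _ _
            _ = |c1| * |A| + |c5| * |B| := by rw [abs_mul, abs_mul]
            _ ≤ |c1| * M + |c5| * M :=
                add_le_add (mul_le_mul_of_nonneg_left hAM (abs_nonneg _))
                  (mul_le_mul_of_nonneg_left hBM (abs_nonneg _))
        nlinarith [this, hM0, abs_nonneg c2, mul_nonneg (abs_nonneg c6) (abs_nonneg X)]
      · have : |-(c2 * A + 2 * c6 * X * B)| ≤ |c2| * M + 2 * |c6| * |X| * M := by
          rw [abs_neg]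
          calc |c2 * A + 2 * c6 * X * B| ≤ |c2 * A| + |2 * c6 * X * B| := abs_add_le _ _
            _ = |c2| * |A| + 2 * |c6| * |X| * |B| := by
                rw [abs_mul c2 A, abs_mul (2 * c6 * X) B, abs_mul (2 * c6) X,
                  abs_mul (2:ℝ) c6, abs_two]
            _ ≤ |c2| * M + 2 * |c6| * |X| * M :=
                add_le_add (mul_le_mul_of_nonneg_left hAM (abs_nonneg _))
                  (mul_le_mul_of_nonneg_left hBM (by positivity))
        nlinarith [this, hM0, abs_nonneg c1, abs_nonneg c5]
    have hg : ContinuousOn (fun t => (|c1| + |c5|) + (|c2| + 2 * |c6| * |(z t).1 2|)) J := by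
      have habs : ContinuousOn (fun t => |(z t).1 2|) J := hx2c.abs
      exact continuousOn_const.add (continuousOn_const.add (continuousOn_const.mul habs))
    have h0 : (((z 0).2 0, (z 0).2 2) : ℝ × ℝ) = 0 := by
      rw [Prod.ext_iff]
      exact ⟨hp00, hp20⟩
    have hzero := stmt18_key_zero hJ h0J hfd hg hfb h0
    intro t ht
    have hft := hzero t ht
    have hA : (z t).2 0 = 0 := by simpa using congrArg Prod.fst hft
    have hB : (z t).2 2 = 0 := by simpa using congrArg Prod.snd hft
    constructor
    · simp [H1, hA]
    · simp [H01, hA, hB]
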